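/- arXiv:2302.02889 — 10 statements merged into one kernel-verified Lean document; each statement's English description precedes it below -/
import Mathlib

section
/- Let X be a set and let S : X × X → X × X be any map. Then S is a Pentagon map if and only if τ ∘ S ∘ τ is a reverse-Pentagon map. -/
/-- The map acting as `S` on the first and second factors of `X × X × X`. -/
def map12 {X : Type*} (S : X × X → X × X) : X × X × X → X × X × X :=
  fun p => ((S (p.1, p.2.1)).1, (S (p.1, p.2.1)).2, p.2.2)

/-- The map acting as `S` on the first and third factors of `X × X × X`. -/
def map13 {X : Type*} (S : X × X → X × X) : X × X × X → X × X × X :=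
  fun p => ((S (p.1, p.2.2)).1, p.2.1, (S (p.1, p.2.2)).2)

/-- The map acting as `S` on the second and third factors of `X × X × X`. -/
def map23 {X : Type*} (S : X × X → X × X) : X × X × X → X × X × X :=
  fun p => (p.1, (S (p.2.1, p.2.2)).1, (S (p.2.1, p.2.2)).2)

/-- `S` is a Pentagon map if `S₁₂ ∘ S₁₃ ∘ S₂₃ = S₂₃ ∘ S₁₂`. -/
def IsPentagonMap {X : Type*} (S : X × X → X × X) : Prop :=
  map12 S ∘ map13 S ∘ map23 S = map23 S ∘ map12 S

/-- `S` is a reverse-Pentagon map if `S₂₃ ∘ S₁₃ ∘ S₁₂ = S₁₂ ∘ S₂₃`. -/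
def IsReversePentagonMap {X : Type*} (S : X × X → X × X) : Prop :=
  map23 S ∘ map13 S ∘ map12 S = map12 S ∘ map23 S

/-- A map `S` is a Pentagon map iff `τ ∘ S ∘ τ` is a reverse-Pentagon map. -/
theorem isPentagonMap_iff_isReversePentagonMap_swap_comp
    {X : Type*} (S : X × X → X × X) :
    IsPentagonMap S ↔ IsReversePentagonMap (Prod.swap ∘ S ∘ Prod.swap) := by
  constructor <;> intro h <;> funext p <;> obtain ⟨x, y, z⟩ := p <;>
    have h' := congrFun h (z, y, x) <;>
    simp only [IsPentagonMap, IsReversePentagonMap, map12, map13, map23,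
      Function.comp_apply, Prod.swap, Prod.mk.injEq, Prod.ext_iff] at h' ⊢ <;>
    tauto
end

section
/- Let X be a set and let S : X × X → X × X be a bijection. Then S is a Pentagon map if and only if the opposite map S^op := τ ∘ S⁻¹ ∘ τ is a Pentagon map. -/
/-- `map12 S` as an equivalence. -/
def eqv12 {X : Type*} (S : (X × X) ≃ (X × X)) : (X × X × X) ≃ (X × X × X) :=
  ⟨map12 ⇑S, map12 ⇑S.symm, fun p => by simp [map12], fun p => by simp [map12]⟩

/-- `map13 S` as an equivalence. -/
def eqv13 {X : Type*} (S : (X × X) ≃ (X × X)) : (X × X × X) ≃ (X × X × X) :=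
  ⟨map13 ⇑S, map13 ⇑S.symm, fun p => by simp [map13], fun p => by simp [map13]⟩

/-- `map23 S` as an equivalence. -/
def eqv23 {X : Type*} (S : (X × X) ≃ (X × X)) : (X × X × X) ≃ (X × X × X) :=
  ⟨map23 ⇑S, map23 ⇑S.symm, fun p => by simp [map23], fun p => by simp [map23]⟩

/-- The opposite map as an equivalence. -/
def opEquiv {X : Type*} (S : (X × X) ≃ (X × X)) : (X × X) ≃ (X × X) :=
  (Equiv.prodComm X X).trans (S.symm.trans (Equiv.prodComm X X))

lemma opEquiv_coe {X : Type*} (S : (X × X) ≃ (X × X)) :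
    ⇑(opEquiv S) = Prod.swap ∘ ⇑S.symm ∘ Prod.swap := rfl

lemma opEquiv_opEquiv {X : Type*} (S : (X × X) ≃ (X × X)) :
    opEquiv (opEquiv S) = S := by
  ext p <;> simp [opEquiv]

lemma key {X : Type*} (S : (X × X) ≃ (X × X)) (h : IsPentagonMap ⇑S) :
    IsPentagonMap ⇑(opEquiv S) := by
  -- convert to an equality of equivalences
  have h' : ((eqv23 S).trans (eqv13 S)).trans (eqv12 S) = (eqv12 S).trans (eqv23 S) :=
    Equiv.ext fun p => congrFun h p
  have h2 := congrArg Equiv.symm h'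
  have h3 : ∀ q : X × X × X,
      map23 ⇑S.symm (map13 ⇑S.symm (map12 ⇑S.symm q)) = map12 ⇑S.symm (map23 ⇑S.symm q) :=
    fun q => Equiv.ext_iff.mp h2 q
  funext p
  exact congrArg (fun r : X × X × X => (r.2.2, r.2.1, r.1))
    (h3 (p.2.2, p.2.1, p.1))

/-- A bijection `S` is a Pentagon map iff the opposite map `S^op = τ ∘ S⁻¹ ∘ τ`
is a Pentagon map. -/
theorem isPentagonMap_iff_isPentagonMap_op
    {X : Type*} (S : (X × X) ≃ (X × X)) :
    IsPentagonMap (⇑S) ↔ IsPentagonMap (Prod.swap ∘ ⇑S.symm ∘ Prod.swap) := by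
  constructor
  · intro h
    rw [← opEquiv_coe]
    exact key S h
  · intro h
    have h' : IsPentagonMap ⇑(opEquiv S) := by rwa [opEquiv_coe]
    have := key (opEquiv S) h'
    rwa [opEquiv_opEquiv] at this
end

section
/- Let X be a set, let S⁽¹⁾, S⁽²⁾, S⁽³⁾, S⁽⁴⁾, S⁽⁵⁾ : X × X → X × X satisfy the entwining Pentagon relation S⁽¹⁾₁₂ ∘ S⁽³⁾₁₃ ∘ S⁽⁵⁾₂₃ = S⁽⁴⁾₂₃ ∘ S⁽²⁾₁₂, and let χ, ψ : X → X be arbitrary maps (boundary maps). Define Q⁽¹⁾ := (χ × id) ∘ S⁽¹⁾, Q⁽²⁾ := (χ × id) ∘ S⁽²⁾, Q⁽⁴⁾ := S⁽⁴⁾ ∘ (id × ψ), Q⁽⁵⁾ := S⁽⁵⁾ ∘ (id × ψ). Then the entwining Pentagon relation Q⁽¹⁾₁₂ ∘ S⁽³⁾₁₃ ∘ Q⁽⁵⁾₂₃ = Q⁽⁴⁾₂₃ ∘ Q⁽²⁾₁₂ holds. -/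
/-- Composing an entwining Pentagon quintuple with boundary maps `χ, ψ` again yields
an entwining Pentagon relation. -/
theorem entwining_pentagon_boundary
    {X : Type*} (S1 S2 S3 S4 S5 : X × X → X × X) (χ ψ : X → X)
    (h : map12 S1 ∘ map13 S3 ∘ map23 S5 = map23 S4 ∘ map12 S2) :
    map12 (Prod.map χ id ∘ S1) ∘ map13 S3 ∘ map23 (S5 ∘ Prod.map id ψ) =
      map23 (S4 ∘ Prod.map id ψ) ∘ map12 (Prod.map χ id ∘ S2) := by
  funext ⟨x, y, z⟩
  have := congrFun h (x, y, ψ z)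
  simp only [map12, map13, map23, Function.comp, Prod.map, id, Prod.ext_iff] at this ⊢
  obtain ⟨h1, h2, h3⟩ := this
  exact ⟨congrArg χ h1, h2, h3⟩
end

section
/- The homogeneous normalization map φ is a Pentagon map: for all x = (x¹,x²), y = (y¹,y²), z = (z¹,z²) in D × D such that y² + y¹x² ≠ 0, z² + z¹y² ≠ 0 and z² + z¹(y² + y¹x²) ≠ 0, one has φ₁₂(φ₁₃(φ₂₃(x,y,z))) = φ₂₃(φ₁₂(x,y,z)). -/
variable {D : Type*} [DivisionRing D]

/-- The homogeneous normalization map `φ`. -/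
def normMap : (D × D) × (D × D) → (D × D) × (D × D) :=
  fun ⟨⟨x1, x2⟩, ⟨y1, y2⟩⟩ =>
    ((x1 - x2 * (y2 + y1 * x2)⁻¹ * (y1 * x1), x2 * (y2 + y1 * x2)⁻¹),
     (y1 * x1, y2 + y1 * x2))

/-- The homogeneous normalization map is a Pentagon map. -/
theorem normMap_pentagon (x1 x2 y1 y2 z1 z2 : D)
    (h1 : y2 + y1 * x2 ≠ 0) (h2 : z2 + z1 * y2 ≠ 0)
    (h3 : z2 + z1 * (y2 + y1 * x2) ≠ 0) :
    map12 normMap (map13 normMap (map23 normMap ((x1, x2), (y1, y2), (z1, z2)))) =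
      map23 normMap (map12 normMap ((x1, x2), (y1, y2), (z1, z2))) := by
  simp only [map12, map13, map23, normMap, Prod.mk.injEq]
  have L1 : z2 + z1 * y2 + z1 * y1 * x2 = z2 + z1 * (y2 + y1 * x2) := by noncomm_ring
  simp only [L1]
  -- abbreviations: a = y2 + y1*x2, b = z2 + z1*(y2+y1*x2), c = z2 + z1*y2
  have key : y2 * (z2 + z1 * y2)⁻¹ +
      (y1 - y2 * (z2 + z1 * y2)⁻¹ * (z1 * y1)) * (x2 * (z2 + z1 * (y2 + y1 * x2))⁻¹) =
      (y2 + y1 * x2) * (z2 + z1 * (y2 + y1 * x2))⁻¹ := by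
    refine mul_right_cancel₀ h3 ?_
    have e1 : (z2 + z1 * y2)⁻¹ * (z2 + z1 * (y2 + y1 * x2)) =
        1 + (z2 + z1 * y2)⁻¹ * (z1 * y1 * x2) := by
      rw [← L1, mul_add, inv_mul_cancel₀ h2]
    calc (y2 * (z2 + z1 * y2)⁻¹ +
          (y1 - y2 * (z2 + z1 * y2)⁻¹ * (z1 * y1)) * (x2 * (z2 + z1 * (y2 + y1 * x2))⁻¹)) *
            (z2 + z1 * (y2 + y1 * x2))
        = y2 * ((z2 + z1 * y2)⁻¹ * (z2 + z1 * (y2 + y1 * x2))) +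
          (y1 - y2 * (z2 + z1 * y2)⁻¹ * (z1 * y1)) *
            (x2 * ((z2 + z1 * (y2 + y1 * x2))⁻¹ * (z2 + z1 * (y2 + y1 * x2)))) := by
          noncomm_ring
      _ = y2 * (1 + (z2 + z1 * y2)⁻¹ * (z1 * y1 * x2)) +
          (y1 - y2 * (z2 + z1 * y2)⁻¹ * (z1 * y1)) * (x2 * 1) := by
          rw [e1, inv_mul_cancel₀ h3]
      _ = (y2 + y1 * x2) * (z2 + z1 * (y2 + y1 * x2))⁻¹ * (z2 + z1 * (y2 + y1 * x2)) := by
          rw [inv_mul_cancel_right₀ h3]; noncomm_ring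
  have g3 : (y1 - y2 * (z2 + z1 * y2)⁻¹ * (z1 * y1)) *
      (x1 - x2 * (z2 + z1 * (y2 + y1 * x2))⁻¹ * (z1 * y1 * x1)) =
      y1 * x1 - (y2 + y1 * x2) * (z2 + z1 * (y2 + y1 * x2))⁻¹ * (z1 * (y1 * x1)) := by
    rw [← key]; noncomm_ring
  refine ⟨⟨?_, ?_⟩, ⟨g3, key⟩, by noncomm_ring, trivial⟩
  · rw [key, mul_inv_rev, inv_inv, g3]
    have hba : x2 * (z2 + z1 * (y2 + y1 * x2))⁻¹ *
        ((z2 + z1 * (y2 + y1 * x2)) * (y2 + y1 * x2)⁻¹) = x2 * (y2 + y1 * x2)⁻¹ := by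
      rw [mul_assoc, inv_mul_cancel_left₀ h3]
    rw [hba, mul_sub]
    have hab : (y2 + y1 * x2)⁻¹ * ((y2 + y1 * x2) * (z2 + z1 * (y2 + y1 * x2))⁻¹ *
        (z1 * (y1 * x1))) = (z2 + z1 * (y2 + y1 * x2))⁻¹ * (z1 * (y1 * x1)) := by
      rw [mul_assoc (y2 + y1 * x2), inv_mul_cancel_left₀ h1]
    rw [mul_assoc x2 (y2 + y1 * x2)⁻¹ ((y2 + y1 * x2) * (z2 + z1 * (y2 + y1 * x2))⁻¹ *
        (z1 * (y1 * x1))), hab]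
    noncomm_ring
  · rw [key, mul_inv_rev, inv_inv, mul_assoc, inv_mul_cancel_left₀ h3]
end

section
/- The matrix re-factorization problem A¹(u)A²(v) = A²(y)A¹(x) of 2×2 matrices over D is equivalent to the homogeneous normalization map: for x = (x¹,x²), y = (y¹,y²) in D × D with y² + y¹x² ≠ 0, the pair (u,v) = φ(x,y) satisfies A¹(u)A²(v) = A²(y)A¹(x); conversely, if (u,v) with v² ≠ 0 satisfies A¹(u)A²(v) = A²(y)A¹(x), then (u,v) = φ(x,y). -/
variable {D : Type*} [DivisionRing D]

/-- The matrix `A¹(x)`: the identity with first row replaced by `(x¹, x²)`. -/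
def A1 (x : D × D) : Matrix (Fin 2) (Fin 2) D := !![x.1, x.2; 0, 1]

/-- The matrix `A²(x)`: the identity with second row replaced by `(x¹, x²)`. -/
def A2 (x : D × D) : Matrix (Fin 2) (Fin 2) D := !![1, 0; x.1, x.2]

/-- The `2 × 2` re-factorization problem `A¹(u)A²(v) = A²(y)A¹(x)` is equivalent to the
homogeneous normalization map `φ`. -/
theorem refactorization_iff_normMap (x y : D × D) :
    (y.2 + y.1 * x.2 ≠ 0 →
      A1 (normMap (x, y)).1 * A2 (normMap (x, y)).2 = A2 y * A1 x) ∧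
    (∀ u v : D × D, v.2 ≠ 0 → A1 u * A2 v = A2 y * A1 x → (u, v) = normMap (x, y)) := by
  obtain ⟨x1, x2⟩ := x
  obtain ⟨y1, y2⟩ := y
  constructor
  · intro h
    simp only [normMap, A1, A2]
    ext i j
    fin_cases i <;> fin_cases j <;>
      simp [Matrix.mul_apply, Fin.sum_univ_two, mul_assoc,
        inv_mul_cancel₀ h, add_comm]
  · rintro ⟨u1, u2⟩ ⟨v1, v2⟩ hv h
    simp only [A1, A2, normMap] at h ⊢
    have h00 := congrFun (congrFun h 0) 0
    have h01 := congrFun (congrFun h 0) 1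
    have h10 := congrFun (congrFun h 1) 0
    have h11 := congrFun (congrFun h 1) 1
    simp [Matrix.mul_apply, Fin.sum_univ_two] at h00 h01 h10 h11
    simp only [ne_eq] at hv
    have hv2 : v2 = y2 + y1 * x2 := by rw [h11, add_comm]
    have hu2 : u2 = x2 * (y2 + y1 * x2)⁻¹ := by
      rw [← hv2, ← h01, mul_assoc, mul_inv_cancel₀ hv, mul_one]
    have hu1 : u1 = x1 - x2 * (y2 + y1 * x2)⁻¹ * (y1 * x1) := by
      rw [← hu2, ← h10]; exact eq_sub_of_add_eq h00
    simp [Prod.ext_iff, hu1, hu2, hv2, h10]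
end

section
/- The homogeneous normalization map φ is birational, with explicit inverse ψ given by ψ((u¹,u²),(v¹,v²)) = ((x¹,x²),(y¹,y²)) where x¹ = u¹ + u²v¹, x² = u²v², y¹ = v¹(u¹ + u²v¹)⁻¹, y² = v² − v¹(u¹ + u²v¹)⁻¹u²v². Namely: (i) if y² + y¹x² ≠ 0 and x¹ ≠ 0, then ψ(φ((x¹,x²),(y¹,y²))) = ((x¹,x²),(y¹,y²)); (ii) if v² ≠ 0 and u¹ + u²v¹ ≠ 0, then φ(ψ((u¹,u²),(v¹,v²))) = ((u¹,u²),(v¹,v²)). -/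
variable {D : Type*} [DivisionRing D]

/-- The explicit inverse `ψ` of the homogeneous normalization map. -/
def normMapInv : (D × D) × (D × D) → (D × D) × (D × D) :=
  fun ⟨⟨u1, u2⟩, ⟨v1, v2⟩⟩ =>
    ((u1 + u2 * v1, u2 * v2),
     (v1 * (u1 + u2 * v1)⁻¹, v2 - v1 * (u1 + u2 * v1)⁻¹ * (u2 * v2)))

/-- The homogeneous normalization map is birational, with explicit inverse `ψ`. -/
theorem normMap_birational :
    (∀ x1 x2 y1 y2 : D, y2 + y1 * x2 ≠ 0 → x1 ≠ 0 →
      normMapInv (normMap ((x1, x2), (y1, y2))) = ((x1, x2), (y1, y2))) ∧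
    (∀ u1 u2 v1 v2 : D, v2 ≠ 0 → u1 + u2 * v1 ≠ 0 →
      normMap (normMapInv ((u1, u2), (v1, v2))) = ((u1, u2), (v1, v2))) := by
  constructor
  · intro x1 x2 y1 y2 hs hx
    simp only [normMap, normMapInv]
    have h1 : x1 - x2 * (y2 + y1 * x2)⁻¹ * (y1 * x1) + x2 * (y2 + y1 * x2)⁻¹ * (y1 * x1) = x1 := by
      abel
    rw [h1]
    have h2 : x2 * (y2 + y1 * x2)⁻¹ * (y2 + y1 * x2) = x2 := by
      rw [mul_assoc, inv_mul_cancel₀ hs, mul_one]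
    rw [h2]
    have h3 : y1 * x1 * x1⁻¹ = y1 := by rw [mul_assoc, mul_inv_cancel₀ hx, mul_one]
    rw [h3]
    have h4 : y2 + y1 * x2 - y1 * x2 = y2 := by abel
    rw [h4]
  · intro u1 u2 v1 v2 hv ht
    simp only [normMap, normMapInv]
    have h1 : v2 - v1 * (u1 + u2 * v1)⁻¹ * (u2 * v2)
        + v1 * (u1 + u2 * v1)⁻¹ * (u2 * v2) = v2 := by abel
    rw [h1]
    have h2 : v1 * (u1 + u2 * v1)⁻¹ * (u1 + u2 * v1) = v1 := by
      rw [mul_assoc, inv_mul_cancel₀ ht, mul_one]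
    rw [h2]
    have h3 : u2 * v2 * v2⁻¹ = u2 := by rw [mul_assoc, mul_inv_cancel₀ hv, mul_one]
    rw [h3]
    have h4 : u1 + u2 * v1 - u2 * v1 = u1 := by abel
    rw [h4]
end

section
/- The map φ^{1,2} (the N = 3 extension of the homogeneous normalization map) is a constant Pentagon map: for all x = (x¹,x²,x³), y = (y¹,y²,y³), z = (z¹,z²,z³) in D³ such that y² + y¹x² ≠ 0, z² + z¹y² ≠ 0 and z² + z¹(y² + y¹x²) ≠ 0, one has φ^{1,2}₁₂(φ^{1,2}₁₃(φ^{1,2}₂₃(x,y,z))) = φ^{1,2}₂₃(φ^{1,2}₁₂(x,y,z)). -/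
variable {D : Type*} [DivisionRing D]

/-- The map `φ^{1,2}`, the `N = 3` extension of the homogeneous normalization map. -/
def phi12 : (D × D × D) × (D × D × D) → (D × D × D) × (D × D × D) :=
  fun ⟨⟨x1, x2, x3⟩, ⟨y1, y2, y3⟩⟩ =>
    ((x1 - x2 * (y2 + y1 * x2)⁻¹ * (y1 * x1),
      x2 * (y2 + y1 * x2)⁻¹,
      x3 - x2 * (y2 + y1 * x2)⁻¹ * (y3 + y1 * x3)),
     (y1 * x1, y2 + y1 * x2, y3 + y1 * x3))


section Aux
variable {D : Type*} [DivisionRing D]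


theorem key5 (x2 y1 y2 z1 z2 : D)
    (h2 : z2 + z1 * y2 ≠ 0)
    (hB : z2 + z1 * y2 + z1 * y1 * x2 ≠ 0) :
    y2 * (z2 + z1 * y2)⁻¹ + (y1 - y2 * (z2 + z1 * y2)⁻¹ * (z1 * y1)) * (x2 * (z2 + z1 * y2 + z1 * y1 * x2)⁻¹) =
    (y2 + y1 * x2) * (z2 + z1 * y2 + z1 * y1 * x2)⁻¹ := by
  have hB' : z2 + z1 * y2 + z1 * (y1 * x2) ≠ 0 := by rwa [← mul_assoc]
  apply mul_right_cancel₀ hB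
  simp only [add_mul, mul_assoc, inv_mul_cancel₀ hB', inv_mul_cancel₀ h2, mul_one]
  have h : (z2+z1*y2)⁻¹ * (z2 + z1 * y2 + z1 * (y1 * x2)) = 1 + (z2+z1*y2)⁻¹*(z1*(y1*x2)) := by
    rw [mul_add, inv_mul_cancel₀ h2]
  rw [h]
  noncomm_ring

theorem key4 (x1 x2 y1 y2 z1 z2 : D)
    (h2 : z2 + z1 * y2 ≠ 0)
    (hB : z2 + z1 * y2 + z1 * y1 * x2 ≠ 0) :
    (y1 - y2 * (z2 + z1 * y2)⁻¹ * (z1 * y1)) * (x1 - x2 * (z2 + z1 * y2 + z1 * y1 * x2)⁻¹ * (z1 * y1 * x1)) =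
    y1 * x1 - (y2 + y1 * x2) * (z2 + z1 * (y2 + y1 * x2))⁻¹ * (z1 * (y1 * x1)) := by
  rw [show z2 + z1 * (y2 + y1 * x2) = z2 + z1 * y2 + z1 * y1 * x2 by noncomm_ring,
    ← key5 x2 y1 y2 z1 z2 h2 hB]
  noncomm_ring

theorem key6 (x2 x3 y1 y2 y3 z1 z2 z3 : D)
    (h2 : z2 + z1 * y2 ≠ 0)
    (hB : z2 + z1 * y2 + z1 * y1 * x2 ≠ 0) :
    y3 - y2 * (z2 + z1 * y2)⁻¹ * (z3 + z1 * y3) +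
      (y1 - y2 * (z2 + z1 * y2)⁻¹ * (z1 * y1)) *
        (x3 - x2 * (z2 + z1 * y2 + z1 * y1 * x2)⁻¹ * (z3 + z1 * y3 + z1 * y1 * x3)) =
    y3 + y1 * x3 - (y2 + y1 * x2) * (z2 + z1 * (y2 + y1 * x2))⁻¹ * (z3 + z1 * (y3 + y1 * x3)) := by
  rw [show z2 + z1 * (y2 + y1 * x2) = z2 + z1 * y2 + z1 * y1 * x2 by noncomm_ring,
    show z3 + z1 * (y3 + y1 * x3) = z3 + z1 * y3 + z1 * y1 * x3 by noncomm_ring,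
    ← key5 x2 y1 y2 z1 z2 h2 hB]
  noncomm_ring

end Aux

/-- The map `φ^{1,2}` is a constant Pentagon map. -/
theorem phi12_pentagon (x1 x2 x3 y1 y2 y3 z1 z2 z3 : D)
    (h1 : y2 + y1 * x2 ≠ 0) (h2 : z2 + z1 * y2 ≠ 0)
    (h3 : z2 + z1 * (y2 + y1 * x2) ≠ 0) :
    map12 phi12 (map13 phi12 (map23 phi12 ((x1, x2, x3), (y1, y2, y3), (z1, z2, z3)))) =
      map23 phi12 (map12 phi12 ((x1, x2, x3), (y1, y2, y3), (z1, z2, z3))) := by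

  have hB : z2 + z1 * y2 + z1 * y1 * x2 ≠ 0 := by
    rw [show z2 + z1 * y2 + z1 * y1 * x2 = z2 + z1 * (y2 + y1 * x2) by noncomm_ring]; exact h3
  simp only [map12, map13, map23, phi12, Prod.mk.injEq]
  refine ⟨⟨?_, ?_, ?_⟩, ⟨?_, ?_, ?_⟩, by noncomm_ring, by noncomm_ring, by noncomm_ring⟩
  · rw [key5 x2 y1 y2 z1 z2 h2 hB, key4 x1 x2 y1 y2 z1 z2 h2 hB, mul_inv_rev, inv_inv,
      show z2 + z1 * (y2 + y1 * x2) = z2 + z1 * y2 + z1 * y1 * x2 by noncomm_ring]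
    have hB' : z2 + z1 * y2 + z1 * (y1 * x2) ≠ 0 := by rwa [← mul_assoc]
    simp only [mul_assoc, mul_sub, inv_mul_cancel_left₀ hB', inv_mul_cancel_left₀ h1]
    noncomm_ring
  · rw [key5 x2 y1 y2 z1 z2 h2 hB, mul_inv_rev, inv_inv]
    have hB' : z2 + z1 * y2 + z1 * (y1 * x2) ≠ 0 := by rwa [← mul_assoc]
    simp only [mul_assoc, inv_mul_cancel_left₀ hB']
  · rw [key5 x2 y1 y2 z1 z2 h2 hB, key6 x2 x3 y1 y2 y3 z1 z2 z3 h2 hB, mul_inv_rev, inv_inv,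
      show z2 + z1 * (y2 + y1 * x2) = z2 + z1 * y2 + z1 * y1 * x2 by noncomm_ring]
    have hB' : z2 + z1 * y2 + z1 * (y1 * x2) ≠ 0 := by rwa [← mul_assoc]
    simp only [mul_assoc, mul_sub, inv_mul_cancel_left₀ hB', inv_mul_cancel_left₀ h1]
    noncomm_ring
  · exact key4 x1 x2 y1 y2 z1 z2 h2 hB
  · rw [show z2 + z1 * (y2 + y1 * x2) = z2 + z1 * y2 + z1 * y1 * x2 by noncomm_ring]
    exact key5 x2 y1 y2 z1 z2 h2 hB
  · exact key6 x2 x3 y1 y2 y3 z1 z2 z3 h2 hB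
end

section
/- For all x, y, z in D³ with x² ≠ 0, y² + y¹x² ≠ 0, z² + z¹y² ≠ 0 and γ := z² + z¹(y² + y¹x²) ≠ 0, both φ^{1,2}₁₂ ∘ φ^{1,2}₁₃ ∘ φ^{1,2}₂₃ and φ^{1,2}₂₃ ∘ φ^{1,2}₁₂ send (x,y,z) to the explicit triple (x̂,ŷ,ẑ) given by: x̂¹ = x²(y²+y¹x²)⁻¹y²(x²)⁻¹x¹, x̂² = x²(y²+y¹x²)⁻¹, x̂³ = x²(y²+y¹x²)⁻¹(y²(x²)⁻¹x³ − y³); ŷ¹ = y¹x¹ − (y²+y¹x²)γ⁻¹z¹y¹x¹, ŷ² = (y²+y¹x²)γ⁻¹, ŷ³ = y³ + y¹x³ − (y²+y¹x²)γ⁻¹δ with δ := z³ + z¹(y³ + y¹x³); ẑ¹ = z¹y¹x¹, ẑ² = z² + z¹(y²+y¹x²), ẑ³ = z³ + z¹(y³+y¹x³). -/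
variable {D : Type*} [DivisionRing D]

set_option maxHeartbeats 2000000 in
/-- Both sides of the Pentagon relation for `φ^{1,2}` send `(x, y, z)` to the same
explicit triple `(x̂, ŷ, ẑ)`. -/
theorem phi12_pentagon_explicit (x1 x2 x3 y1 y2 y3 z1 z2 z3 : D)
    (hx : x2 ≠ 0)
    (h1 : y2 + y1 * x2 ≠ 0) (h2 : z2 + z1 * y2 ≠ 0)
    (h3 : z2 + z1 * (y2 + y1 * x2) ≠ 0) :
    map12 phi12 (map13 phi12 (map23 phi12 ((x1, x2, x3), (y1, y2, y3), (z1, z2, z3)))) =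
      ((x2 * (y2 + y1 * x2)⁻¹ * y2 * x2⁻¹ * x1,
        x2 * (y2 + y1 * x2)⁻¹,
        x2 * (y2 + y1 * x2)⁻¹ * (y2 * x2⁻¹ * x3 - y3)),
       (y1 * x1 - (y2 + y1 * x2) * (z2 + z1 * (y2 + y1 * x2))⁻¹ * (z1 * (y1 * x1)),
        (y2 + y1 * x2) * (z2 + z1 * (y2 + y1 * x2))⁻¹,
        y3 + y1 * x3 - (y2 + y1 * x2) * (z2 + z1 * (y2 + y1 * x2))⁻¹ *
          (z3 + z1 * (y3 + y1 * x3))),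
       (z1 * (y1 * x1),
        z2 + z1 * (y2 + y1 * x2),
        z3 + z1 * (y3 + y1 * x3))) ∧
    map23 phi12 (map12 phi12 ((x1, x2, x3), (y1, y2, y3), (z1, z2, z3))) =
      ((x2 * (y2 + y1 * x2)⁻¹ * y2 * x2⁻¹ * x1,
        x2 * (y2 + y1 * x2)⁻¹,
        x2 * (y2 + y1 * x2)⁻¹ * (y2 * x2⁻¹ * x3 - y3)),
       (y1 * x1 - (y2 + y1 * x2) * (z2 + z1 * (y2 + y1 * x2))⁻¹ * (z1 * (y1 * x1)),
        (y2 + y1 * x2) * (z2 + z1 * (y2 + y1 * x2))⁻¹,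
        y3 + y1 * x3 - (y2 + y1 * x2) * (z2 + z1 * (y2 + y1 * x2))⁻¹ *
          (z3 + z1 * (y3 + y1 * x3))),
       (z1 * (y1 * x1),
        z2 + z1 * (y2 + y1 * x2),
        z3 + z1 * (y3 + y1 * x3))) := by
  -- abbreviations: A := y2 + y1*x2, B := z2 + z1*y2, C := z2 + z1*A
  have hC : z2 + z1 * y2 + z1 * y1 * x2 = z2 + z1 * (y2 + y1 * x2) := by noncomm_ring
  -- key identity: x2 * A⁻¹ * y2 * x2⁻¹ = 1 - x2 * A⁻¹ * y1
  have hk1 : x2 * (y2 + y1 * x2)⁻¹ * y2 * x2⁻¹ = 1 - x2 * (y2 + y1 * x2)⁻¹ * y1 := by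
    refine eq_sub_of_add_eq ?_
    calc x2 * (y2 + y1 * x2)⁻¹ * y2 * x2⁻¹ + x2 * (y2 + y1 * x2)⁻¹ * y1
        = x2 * ((y2 + y1 * x2)⁻¹ * ((y2 + y1 * x2) * x2⁻¹)) := by
          rw [add_mul y2 (y1 * x2) x2⁻¹, mul_assoc y1 x2 x2⁻¹, mul_inv_cancel₀ hx, mul_one]
          noncomm_ring
      _ = 1 := by rw [inv_mul_cancel_left₀ h1, mul_inv_cancel₀ hx]
  -- z1*(y1*x2) = C - B
  have hcb : z1 * (y1 * x2) = (z2 + z1 * (y2 + y1 * x2)) - (z2 + z1 * y2) := by noncomm_ring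
  -- hq : y2*B⁻¹*(z1*y1)*(x2*C⁻¹) = y2*B⁻¹ - y2*C⁻¹
  have hq : y2 * (z2 + z1 * y2)⁻¹ * (z1 * y1) * (x2 * (z2 + z1 * (y2 + y1 * x2))⁻¹)
      = y2 * (z2 + z1 * y2)⁻¹ - y2 * (z2 + z1 * (y2 + y1 * x2))⁻¹ := by
    calc y2 * (z2 + z1 * y2)⁻¹ * (z1 * y1) * (x2 * (z2 + z1 * (y2 + y1 * x2))⁻¹)
        = y2 * (z2 + z1 * y2)⁻¹ * (z1 * (y1 * x2)) * (z2 + z1 * (y2 + y1 * x2))⁻¹ := by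
          noncomm_ring
      _ = y2 * ((z2 + z1 * y2)⁻¹ * ((z2 + z1 * (y2 + y1 * x2)) * (z2 + z1 * (y2 + y1 * x2))⁻¹))
            - y2 * ((z2 + z1 * y2)⁻¹ * (z2 + z1 * y2)) * (z2 + z1 * (y2 + y1 * x2))⁻¹ := by
          rw [hcb]; noncomm_ring
      _ = y2 * (z2 + z1 * y2)⁻¹ - y2 * (z2 + z1 * (y2 + y1 * x2))⁻¹ := by
          rw [mul_inv_cancel₀ h3, inv_mul_cancel₀ h2, mul_one, mul_one]
  -- l5 : the middle denominator equals A * C⁻¹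
  have l5 : y2 * (z2 + z1 * y2)⁻¹ +
      (y1 - y2 * (z2 + z1 * y2)⁻¹ * (z1 * y1)) * (x2 * (z2 + z1 * (y2 + y1 * x2))⁻¹)
      = (y2 + y1 * x2) * (z2 + z1 * (y2 + y1 * x2))⁻¹ := by
    calc y2 * (z2 + z1 * y2)⁻¹ +
        (y1 - y2 * (z2 + z1 * y2)⁻¹ * (z1 * y1)) * (x2 * (z2 + z1 * (y2 + y1 * x2))⁻¹)
        = y2 * (z2 + z1 * y2)⁻¹ + y1 * (x2 * (z2 + z1 * (y2 + y1 * x2))⁻¹)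
            - y2 * (z2 + z1 * y2)⁻¹ * (z1 * y1) * (x2 * (z2 + z1 * (y2 + y1 * x2))⁻¹) := by
          noncomm_ring
      _ = (y2 + y1 * x2) * (z2 + z1 * (y2 + y1 * x2))⁻¹ := by rw [hq]; noncomm_ring
  -- l4 : new y1
  have l4 : (y1 - y2 * (z2 + z1 * y2)⁻¹ * (z1 * y1)) *
        (x1 - x2 * (z2 + z1 * (y2 + y1 * x2))⁻¹ * (z1 * y1 * x1))
      = y1 * x1 - (y2 + y1 * x2) * (z2 + z1 * (y2 + y1 * x2))⁻¹ * (z1 * (y1 * x1)) := by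
    calc (y1 - y2 * (z2 + z1 * y2)⁻¹ * (z1 * y1)) *
          (x1 - x2 * (z2 + z1 * (y2 + y1 * x2))⁻¹ * (z1 * y1 * x1))
        = y1 * x1 - y1 * (x2 * (z2 + z1 * (y2 + y1 * x2))⁻¹ * (z1 * y1 * x1))
            - y2 * (z2 + z1 * y2)⁻¹ * (z1 * y1) * x1
            + (y2 * (z2 + z1 * y2)⁻¹ * (z1 * y1) * (x2 * (z2 + z1 * (y2 + y1 * x2))⁻¹)) *
                (z1 * (y1 * x1)) := by noncomm_ring
      _ = y1 * x1 - y1 * (x2 * (z2 + z1 * (y2 + y1 * x2))⁻¹ * (z1 * y1 * x1))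
            - y2 * (z2 + z1 * y2)⁻¹ * (z1 * y1) * x1
            + (y2 * (z2 + z1 * y2)⁻¹ - y2 * (z2 + z1 * (y2 + y1 * x2))⁻¹) *
                (z1 * (y1 * x1)) := by rw [hq]
      _ = y1 * x1 - (y2 + y1 * x2) * (z2 + z1 * (y2 + y1 * x2))⁻¹ * (z1 * (y1 * x1)) := by
          noncomm_ring
  -- l6 : new y3
  have l6 : y3 - y2 * (z2 + z1 * y2)⁻¹ * (z3 + z1 * y3) +
        (y1 - y2 * (z2 + z1 * y2)⁻¹ * (z1 * y1)) *
          (x3 - x2 * (z2 + z1 * (y2 + y1 * x2))⁻¹ * (z3 + z1 * y3 + z1 * y1 * x3))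
      = y3 + y1 * x3 - (y2 + y1 * x2) * (z2 + z1 * (y2 + y1 * x2))⁻¹ *
          (z3 + z1 * (y3 + y1 * x3)) := by
    calc y3 - y2 * (z2 + z1 * y2)⁻¹ * (z3 + z1 * y3) +
          (y1 - y2 * (z2 + z1 * y2)⁻¹ * (z1 * y1)) *
            (x3 - x2 * (z2 + z1 * (y2 + y1 * x2))⁻¹ * (z3 + z1 * y3 + z1 * y1 * x3))
        = y3 + y1 * x3 - y2 * (z2 + z1 * y2)⁻¹ * (z3 + z1 * y3)
            - y1 * (x2 * (z2 + z1 * (y2 + y1 * x2))⁻¹ * (z3 + z1 * y3 + z1 * y1 * x3))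
            - y2 * (z2 + z1 * y2)⁻¹ * (z1 * y1) * x3
            + (y2 * (z2 + z1 * y2)⁻¹ * (z1 * y1) * (x2 * (z2 + z1 * (y2 + y1 * x2))⁻¹)) *
                (z3 + z1 * y3 + z1 * y1 * x3) := by noncomm_ring
      _ = y3 + y1 * x3 - y2 * (z2 + z1 * y2)⁻¹ * (z3 + z1 * y3)
            - y1 * (x2 * (z2 + z1 * (y2 + y1 * x2))⁻¹ * (z3 + z1 * y3 + z1 * y1 * x3))
            - y2 * (z2 + z1 * y2)⁻¹ * (z1 * y1) * x3
            + (y2 * (z2 + z1 * y2)⁻¹ - y2 * (z2 + z1 * (y2 + y1 * x2))⁻¹) *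
                (z3 + z1 * y3 + z1 * y1 * x3) := by rw [hq]
      _ = y3 + y1 * x3 - (y2 + y1 * x2) * (z2 + z1 * (y2 + y1 * x2))⁻¹ *
            (z3 + z1 * (y3 + y1 * x3)) := by noncomm_ring
  constructor
  · simp only [map12, map13, map23, phi12, Prod.mk.injEq]
    rw [hC, l5, l4, l6, mul_inv_rev, inv_inv]
    refine ⟨⟨?_, ?_, ?_⟩, ⟨rfl, rfl, rfl⟩, by noncomm_ring, rfl, by noncomm_ring⟩
    · -- x̂1
      calc x1 - x2 * (z2 + z1 * (y2 + y1 * x2))⁻¹ * (z1 * y1 * x1) -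
            x2 * (z2 + z1 * (y2 + y1 * x2))⁻¹ *
              ((z2 + z1 * (y2 + y1 * x2)) * (y2 + y1 * x2)⁻¹) *
              (y1 * x1 - (y2 + y1 * x2) * (z2 + z1 * (y2 + y1 * x2))⁻¹ * (z1 * (y1 * x1)))
          = x1 - x2 * (z2 + z1 * (y2 + y1 * x2))⁻¹ * (z1 * y1 * x1) -
              x2 * ((z2 + z1 * (y2 + y1 * x2))⁻¹ * ((z2 + z1 * (y2 + y1 * x2)) *
                ((y2 + y1 * x2)⁻¹ * (y1 * x1))))
              + x2 * ((z2 + z1 * (y2 + y1 * x2))⁻¹ * ((z2 + z1 * (y2 + y1 * x2)) *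
                ((y2 + y1 * x2)⁻¹ * ((y2 + y1 * x2) *
                  ((z2 + z1 * (y2 + y1 * x2))⁻¹ * (z1 * (y1 * x1))))))) := by noncomm_ring
        _ = x1 - x2 * (y2 + y1 * x2)⁻¹ * (y1 * x1) := by
            rw [inv_mul_cancel_left₀ h3, inv_mul_cancel_left₀ h3, inv_mul_cancel_left₀ h1]
            noncomm_ring
        _ = x2 * (y2 + y1 * x2)⁻¹ * y2 * x2⁻¹ * x1 := by rw [hk1]; noncomm_ring
    · -- x̂2
      calc x2 * (z2 + z1 * (y2 + y1 * x2))⁻¹ *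
            ((z2 + z1 * (y2 + y1 * x2)) * (y2 + y1 * x2)⁻¹)
          = x2 * ((z2 + z1 * (y2 + y1 * x2))⁻¹ * ((z2 + z1 * (y2 + y1 * x2)) *
              (y2 + y1 * x2)⁻¹)) := by noncomm_ring
        _ = x2 * (y2 + y1 * x2)⁻¹ := by rw [inv_mul_cancel_left₀ h3]
    · -- x̂3
      calc x3 - x2 * (z2 + z1 * (y2 + y1 * x2))⁻¹ * (z3 + z1 * y3 + z1 * y1 * x3) -
            x2 * (z2 + z1 * (y2 + y1 * x2))⁻¹ *
              ((z2 + z1 * (y2 + y1 * x2)) * (y2 + y1 * x2)⁻¹) *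
              (y3 + y1 * x3 - (y2 + y1 * x2) * (z2 + z1 * (y2 + y1 * x2))⁻¹ *
                (z3 + z1 * (y3 + y1 * x3)))
          = x3 - x2 * (z2 + z1 * (y2 + y1 * x2))⁻¹ * (z3 + z1 * y3 + z1 * y1 * x3) -
              x2 * ((z2 + z1 * (y2 + y1 * x2))⁻¹ * ((z2 + z1 * (y2 + y1 * x2)) *
                ((y2 + y1 * x2)⁻¹ * (y3 + y1 * x3))))
              + x2 * ((z2 + z1 * (y2 + y1 * x2))⁻¹ * ((z2 + z1 * (y2 + y1 * x2)) *
                ((y2 + y1 * x2)⁻¹ * ((y2 + y1 * x2) *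
                  ((z2 + z1 * (y2 + y1 * x2))⁻¹ * (z3 + z1 * (y3 + y1 * x3))))))) := by
            noncomm_ring
        _ = x3 - x2 * (y2 + y1 * x2)⁻¹ * (y3 + y1 * x3) := by
            rw [inv_mul_cancel_left₀ h3, inv_mul_cancel_left₀ h3, inv_mul_cancel_left₀ h1]
            noncomm_ring
        _ = x2 * (y2 + y1 * x2)⁻¹ * (y2 * x2⁻¹ * x3 - y3) := by
            have : x2 * (y2 + y1 * x2)⁻¹ * (y2 * x2⁻¹ * x3 - y3)
                = x2 * (y2 + y1 * x2)⁻¹ * y2 * x2⁻¹ * x3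
                  - x2 * (y2 + y1 * x2)⁻¹ * y3 := by noncomm_ring
            rw [this, hk1]; noncomm_ring
  · simp only [map12, map13, map23, phi12, Prod.mk.injEq]
    refine ⟨⟨?_, trivial, ?_⟩, trivial⟩
    · rw [hk1]; noncomm_ring
    · have : x2 * (y2 + y1 * x2)⁻¹ * (y2 * x2⁻¹ * x3 - y3)
          = x2 * (y2 + y1 * x2)⁻¹ * y2 * x2⁻¹ * x3
            - x2 * (y2 + y1 * x2)⁻¹ * y3 := by noncomm_ring
      rw [this, hk1]; noncomm_ring
end

section
/- The maps φ^{1,2}, φ^{1,3} := (σ₂₃ × σ₂₃) ∘ φ^{1,2} ∘ (σ₂₃ × σ₂₃) and φ^{2,3} := (σ₁₂ × σ₁₂) ∘ φ^{1,3} ∘ (σ₁₂ × σ₁₂) satisfy the entwining (non-constant) Yang-Baxter relation: for all x, y, z in D³ such that every element whose inverse is taken in the evaluation of either side at (x,y,z) is nonzero, φ^{1,2}₁₂ ∘ φ^{1,3}₁₃ ∘ φ^{2,3}₂₃ (x,y,z) = φ^{2,3}₂₃ ∘ φ^{1,3}₁₃ ∘ φ^{1,2}₁₂ (x,y,z). 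-/
variable {D : Type*} [DivisionRing D]

/-- The involution `σ₂₃` interchanging the second and third components. -/
def sigma23 : D × D × D → D × D × D := fun ⟨x1, x2, x3⟩ => (x1, x3, x2)

/-- The involution `σ₁₂` interchanging the first and second components. -/
def sigma12 : D × D × D → D × D × D := fun ⟨x1, x2, x3⟩ => (x2, x1, x3)

/-- The conjugate map `φ^{1,3} = (σ₂₃ × σ₂₃) ∘ φ^{1,2} ∘ (σ₂₃ × σ₂₃)`. -/
def phi13 : (D × D × D) × (D × D × D) → (D × D × D) × (D × D × D) :=
  Prod.map sigma23 sigma23 ∘ phi12 ∘ Prod.map sigma23 sigma23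

/-- The conjugate map `φ^{2,3} = (σ₁₂ × σ₁₂) ∘ φ^{1,3} ∘ (σ₁₂ × σ₁₂)`. -/
def phi23 : (D × D × D) × (D × D × D) → (D × D × D) × (D × D × D) :=
  Prod.map sigma12 sigma12 ∘ phi13 ∘ Prod.map sigma12 sigma12

/-- The element inverted when evaluating `φ^{1,2}` at `(a, b)`. -/
def invArg12 (a b : D × D × D) : D := b.2.1 + b.1 * a.2.1

/-- The element inverted when evaluating `φ^{1,3}` at `(a, b)`. -/
def invArg13 (a b : D × D × D) : D := invArg12 (sigma23 a) (sigma23 b)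

/-- The element inverted when evaluating `φ^{2,3}` at `(a, b)`. -/
def invArg23 (a b : D × D × D) : D := invArg13 (sigma12 a) (sigma12 b)

private lemma cancelPQ {D : Type*} [DivisionRing D] {p q u v : D} (hp : p ≠ 0) (hq : q ≠ 0)
    (h : p * u = v * q) : p⁻¹ * v = u * q⁻¹ := by
  have h2 : p⁻¹ * (p * u) * q⁻¹ = p⁻¹ * (v * q) * q⁻¹ := by rw [h]
  simp only [mul_assoc, inv_mul_cancel_left₀ hp, mul_inv_cancel₀ hq, mul_one] at h2
  exact h2.symm

set_option maxHeartbeats 4000000 in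
/-- The maps `φ^{1,2}`, `φ^{1,3}`, `φ^{2,3}` satisfy the entwining (non-constant)
Yang-Baxter relation, wherever all the inverses taken on either side are inverses of
nonzero elements. -/
theorem entwining_yang_baxter_phi (x y z : D × D × D)
    (hL1 : invArg23 y z ≠ 0)
    (hL2 : invArg13 (map23 phi23 (x, y, z)).1 (map23 phi23 (x, y, z)).2.2 ≠ 0)
    (hL3 : invArg12 (map13 phi13 (map23 phi23 (x, y, z))).1
             (map13 phi13 (map23 phi23 (x, y, z))).2.1 ≠ 0)
    (hR1 : invArg12 x y ≠ 0)
    (hR2 : invArg13 (map12 phi12 (x, y, z)).1 (map12 phi12 (x, y, z)).2.2 ≠ 0)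
    (hR3 : invArg23 (map13 phi13 (map12 phi12 (x, y, z))).2.1
             (map13 phi13 (map12 phi12 (x, y, z))).2.2 ≠ 0) :
    map12 phi12 (map13 phi13 (map23 phi23 (x, y, z))) =
      map23 phi23 (map13 phi13 (map12 phi12 (x, y, z))) := by
  obtain ⟨x1, x2, x3⟩ := x
  obtain ⟨y1, y2, y3⟩ := y
  obtain ⟨z1, z2, z3⟩ := z
  simp only [map12, map13, map23, phi12, phi13, phi23, sigma12, sigma23, invArg12, invArg13,
    invArg23, Prod.map, Function.comp, Prod.mk.injEq] at *
  set w := z1 + z2 * y1 with hw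
  set t := y3 + y1 * x3 with ht
  set A := y2 + y1 * x2 with hA
  set C := z3 + z2 * y3 with hC
  set s := z2 * y2 + w * x2 with hs
  set B := C + w * x3 with hB
  -- basic nonzero facts
  have hA0 : A ≠ 0 := hR1
  have hC0 : C ≠ 0 := hL1
  have hB0 : B ≠ 0 := hL2
  -- Z2 = s * A⁻¹
  have hZ2rw : z2 + z1 * (x2 * A⁻¹) = s * A⁻¹ := by
    have h1 : z2 * y2 + (z1 + z2 * y1) * x2 = z2 * A + z1 * x2 := by rw [hA]; noncomm_ring
    rw [hs, hw, h1, add_mul, mul_assoc, mul_assoc, mul_inv_cancel₀ hA0, mul_one]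
  -- B' = B - s*A⁻¹*t
  have hB'rw : z3 + z1 * (x3 - x2 * A⁻¹ * t) = B - s * A⁻¹ * t := by
    rw [show s * A⁻¹ * t = (z2 + z1 * (x2 * A⁻¹)) * t from by rw [hZ2rw], hB, hC, hw, ht]
    noncomm_ring
  -- key identity for the y-part
  have hY1x3B : (y1 - y3 * C⁻¹ * w) * (x3 * B⁻¹) = t * B⁻¹ - y3 * C⁻¹ := by
    have h1 : C⁻¹ * (w * (x3 * B⁻¹)) = C⁻¹ - B⁻¹ := by
      calc C⁻¹ * (w * (x3 * B⁻¹)) = C⁻¹ * ((B - C) * B⁻¹) := by rw [hB]; noncomm_ring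
      _ = C⁻¹ - B⁻¹ := by
          rw [sub_mul, mul_inv_cancel₀ hB0, mul_sub, mul_one, inv_mul_cancel_left₀ hC0]
    calc (y1 - y3 * C⁻¹ * w) * (x3 * B⁻¹)
        = y1 * (x3 * B⁻¹) - y3 * (C⁻¹ * (w * (x3 * B⁻¹))) := by noncomm_ring
      _ = y1 * (x3 * B⁻¹) - y3 * (C⁻¹ - B⁻¹) := by rw [h1]
      _ = t * B⁻¹ - y3 * C⁻¹ := by rw [ht]; noncomm_ring
  have hYt : y3 * C⁻¹ + (y1 - y3 * C⁻¹ * w) * (x3 * B⁻¹) = t * B⁻¹ := by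
    rw [hY1x3B]; noncomm_ring
  -- A3 = A - t*B⁻¹*s
  have hA3rw : y2 - y3 * C⁻¹ * (z2 * y2) + (y1 - y3 * C⁻¹ * w) * (x2 - x3 * B⁻¹ * s)
      = A - t * B⁻¹ * s := by
    calc y2 - y3 * C⁻¹ * (z2 * y2) + (y1 - y3 * C⁻¹ * w) * (x2 - x3 * B⁻¹ * s)
        = y2 - y3 * C⁻¹ * (z2 * y2) +
            ((y1 - y3 * C⁻¹ * w) * x2 - ((y1 - y3 * C⁻¹ * w) * (x3 * B⁻¹)) * s) := by
          noncomm_ring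
      _ = y2 - y3 * C⁻¹ * (z2 * y2) +
            ((y1 - y3 * C⁻¹ * w) * x2 - (t * B⁻¹ - y3 * C⁻¹) * s) := by rw [hY1x3B]
      _ = A - t * B⁻¹ * s := by rw [hs, hA]; noncomm_ring
  have hA30 : A - t * B⁻¹ * s ≠ 0 := by rw [← hA3rw]; exact hL3
  have hB'0 : B - s * A⁻¹ * t ≠ 0 := by rw [← hB'rw]; exact hR2
  -- Schur-type identities
  have inner3 : (A - t * B⁻¹ * s) * (A⁻¹ * t) = t * B⁻¹ * (B - s * A⁻¹ * t) := by
    calc (A - t * B⁻¹ * s) * (A⁻¹ * t)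
        = A * (A⁻¹ * t) - t * (B⁻¹ * (s * (A⁻¹ * t))) := by noncomm_ring
      _ = t - t * (B⁻¹ * (s * (A⁻¹ * t))) := by rw [mul_inv_cancel_left₀ hA0]
      _ = t * (B⁻¹ * B) - t * (B⁻¹ * (s * (A⁻¹ * t))) := by
          rw [inv_mul_cancel₀ hB0, mul_one]
      _ = t * B⁻¹ * (B - s * A⁻¹ * t) := by noncomm_ring
  have inner2 : (B - s * A⁻¹ * t) * (B⁻¹ * s) = s * A⁻¹ * (A - t * B⁻¹ * s) := by
    calc (B - s * A⁻¹ * t) * (B⁻¹ * s)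
        = B * (B⁻¹ * s) - s * (A⁻¹ * (t * (B⁻¹ * s))) := by noncomm_ring
      _ = s - s * (A⁻¹ * (t * (B⁻¹ * s))) := by rw [mul_inv_cancel_left₀ hB0]
      _ = s * (A⁻¹ * A) - s * (A⁻¹ * (t * (B⁻¹ * s))) := by
          rw [inv_mul_cancel₀ hA0, mul_one]
      _ = s * A⁻¹ * (A - t * B⁻¹ * s) := by noncomm_ring
  have S3 : (A - t * B⁻¹ * s)⁻¹ * (t * B⁻¹) = (A⁻¹ * t) * (B - s * A⁻¹ * t)⁻¹ :=
    cancelPQ hA30 hB'0 inner3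
  have S2 : (B - s * A⁻¹ * t)⁻¹ * (s * A⁻¹) = (B⁻¹ * s) * (A - t * B⁻¹ * s)⁻¹ :=
    cancelPQ hB'0 hA30 inner2
  have S3r : ∀ r : D, (A - t * B⁻¹ * s)⁻¹ * (t * (B⁻¹ * r))
      = A⁻¹ * (t * ((B - s * A⁻¹ * t)⁻¹ * r)) := by
    intro r
    have h : ((A - t * B⁻¹ * s)⁻¹ * (t * B⁻¹)) * r
        = ((A⁻¹ * t) * (B - s * A⁻¹ * t)⁻¹) * r := by rw [S3]
    simpa only [mul_assoc] using h
  have S2r : ∀ r : D, B⁻¹ * (s * ((A - t * B⁻¹ * s)⁻¹ * r))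
      = (B - s * A⁻¹ * t)⁻¹ * (s * (A⁻¹ * r)) := by
    intro r
    have h : ((B - s * A⁻¹ * t)⁻¹ * (s * A⁻¹)) * r
        = ((B⁻¹ * s) * (A - t * B⁻¹ * s)⁻¹) * r := by rw [S2]
    simpa only [mul_assoc] using h.symm
  have hsplit : ∀ r : D, r = (A - t * B⁻¹ * s) * (A⁻¹ * r) + t * (B⁻¹ * (s * (A⁻¹ * r))) := by
    intro r
    calc r = A * (A⁻¹ * r) := (mul_inv_cancel_left₀ hA0 r).symm
      _ = (A - t * B⁻¹ * s) * (A⁻¹ * r) + t * (B⁻¹ * (s * (A⁻¹ * r))) := by noncomm_ring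
  have S1r : ∀ r : D, (A - t * B⁻¹ * s)⁻¹ * r
      = A⁻¹ * r + A⁻¹ * (t * ((B - s * A⁻¹ * t)⁻¹ * (s * (A⁻¹ * r)))) := by
    intro r
    calc (A - t * B⁻¹ * s)⁻¹ * r
        = (A - t * B⁻¹ * s)⁻¹ *
            ((A - t * B⁻¹ * s) * (A⁻¹ * r) + t * (B⁻¹ * (s * (A⁻¹ * r)))) := by
          rw [← hsplit r]
      _ = A⁻¹ * r + (A - t * B⁻¹ * s)⁻¹ * (t * (B⁻¹ * (s * (A⁻¹ * r)))) := by
          rw [mul_add, inv_mul_cancel_left₀ hA30]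
      _ = A⁻¹ * r + A⁻¹ * (t * ((B - s * A⁻¹ * t)⁻¹ * (s * (A⁻¹ * r)))) := by rw [S3r]
  have hKAr : ∀ r : D, A⁻¹ * (t * (B⁻¹ * (s * ((A - t * B⁻¹ * s)⁻¹ * r))))
      = (A - t * B⁻¹ * s)⁻¹ * r - A⁻¹ * r := by
    intro r
    calc A⁻¹ * (t * (B⁻¹ * (s * ((A - t * B⁻¹ * s)⁻¹ * r))))
        = A⁻¹ * (A * ((A - t * B⁻¹ * s)⁻¹ * r)) -
            A⁻¹ * ((A - t * B⁻¹ * s) * ((A - t * B⁻¹ * s)⁻¹ * r)) := by noncomm_ring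
      _ = (A - t * B⁻¹ * s)⁻¹ * r - A⁻¹ * r := by
          rw [inv_mul_cancel_left₀ hA0, mul_inv_cancel_left₀ hA30]
  have hKBr : ∀ r : D, B⁻¹ * (s * (A⁻¹ * (t * ((B - s * A⁻¹ * t)⁻¹ * r))))
      = (B - s * A⁻¹ * t)⁻¹ * r - B⁻¹ * r := by
    intro r
    calc B⁻¹ * (s * (A⁻¹ * (t * ((B - s * A⁻¹ * t)⁻¹ * r))))
        = B⁻¹ * (B * ((B - s * A⁻¹ * t)⁻¹ * r)) -
            B⁻¹ * ((B - s * A⁻¹ * t) * ((B - s * A⁻¹ * t)⁻¹ * r)) := by noncomm_ring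
      _ = (B - s * A⁻¹ * t)⁻¹ * r - B⁻¹ * r := by
          rw [inv_mul_cancel_left₀ hB0, mul_inv_cancel_left₀ hB'0]
  -- further y-part facts
  have hYW : (y1 - y3 * C⁻¹ * w) * (x1 - x3 * B⁻¹ * (w * x1))
      = y1 * x1 - t * (B⁻¹ * (w * x1)) := by
    calc (y1 - y3 * C⁻¹ * w) * (x1 - x3 * B⁻¹ * (w * x1))
        = (y1 - y3 * C⁻¹ * w) * x1 - ((y1 - y3 * C⁻¹ * w) * (x3 * B⁻¹)) * (w * x1) := by
          noncomm_ring
      _ = (y1 - y3 * C⁻¹ * w) * x1 - (t * B⁻¹ - y3 * C⁻¹) * (w * x1) := by rw [hY1x3B]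
      _ = y1 * x1 - t * (B⁻¹ * (w * x1)) := by rw [hw]; noncomm_ring
  have hz1X : z1 * (x1 - x2 * A⁻¹ * (y1 * x1)) = w * x1 - s * A⁻¹ * (y1 * x1) := by
    rw [← hZ2rw, hw]; noncomm_ring
  -- the nine component identities
  have g7 : w * x1 = z1 * (x1 - x2 * A⁻¹ * (y1 * x1)) + (z2 + z1 * (x2 * A⁻¹)) * (y1 * x1) := by
    rw [hZ2rw, hz1X]; noncomm_ring
  have g8 : s = (z2 + z1 * (x2 * A⁻¹)) * A := by
    rw [hZ2rw, mul_assoc, inv_mul_cancel₀ hA0, mul_one]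
  have g9 : B = z3 + z1 * (x3 - x2 * A⁻¹ * t) + (z2 + z1 * (x2 * A⁻¹)) * t := by
    rw [hB'rw, hZ2rw]; noncomm_ring
  refine ⟨⟨?_, ?_, ?_⟩, ⟨?_, ?_, ?_⟩, g7, g8, g9⟩
  · -- G1
    rw [hA3rw, hB'rw, hYW, hz1X]
    calc x1 - x3 * B⁻¹ * (w * x1) -
          (x2 - x3 * B⁻¹ * s) * (A - t * B⁻¹ * s)⁻¹ * (y1 * x1 - t * (B⁻¹ * (w * x1)))
        = x1 - x3 * (B⁻¹ * (w * x1)) - x2 * ((A - t * B⁻¹ * s)⁻¹ * (y1 * x1))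
            + x3 * (B⁻¹ * (s * ((A - t * B⁻¹ * s)⁻¹ * (y1 * x1))))
            + x2 * ((A - t * B⁻¹ * s)⁻¹ * (t * (B⁻¹ * (w * x1))))
            - x3 * (B⁻¹ * (s * ((A - t * B⁻¹ * s)⁻¹ * (t * (B⁻¹ * (w * x1)))))) := by
          noncomm_ring
      _ = x1 - x3 * (B⁻¹ * (w * x1)) - x2 * ((A - t * B⁻¹ * s)⁻¹ * (y1 * x1))
            + x3 * (B⁻¹ * (s * ((A - t * B⁻¹ * s)⁻¹ * (y1 * x1))))
            + x2 * (A⁻¹ * (t * ((B - s * A⁻¹ * t)⁻¹ * (w * x1))))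
            - x3 * (B⁻¹ * (s * (A⁻¹ * (t * ((B - s * A⁻¹ * t)⁻¹ * (w * x1)))))) := by
          rw [S3r]
      _ = x1 - x3 * (B⁻¹ * (w * x1)) - x2 * ((A - t * B⁻¹ * s)⁻¹ * (y1 * x1))
            + x3 * ((B - s * A⁻¹ * t)⁻¹ * (s * (A⁻¹ * (y1 * x1))))
            + x2 * (A⁻¹ * (t * ((B - s * A⁻¹ * t)⁻¹ * (w * x1))))
            - x3 * ((B - s * A⁻¹ * t)⁻¹ * (w * x1) - B⁻¹ * (w * x1)) := by
          rw [S2r, hKBr]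
      _ = x1 - x3 * (B⁻¹ * (w * x1))
            - x2 * (A⁻¹ * (y1 * x1)
                + A⁻¹ * (t * ((B - s * A⁻¹ * t)⁻¹ * (s * (A⁻¹ * (y1 * x1))))))
            + x3 * ((B - s * A⁻¹ * t)⁻¹ * (s * (A⁻¹ * (y1 * x1))))
            + x2 * (A⁻¹ * (t * ((B - s * A⁻¹ * t)⁻¹ * (w * x1))))
            - x3 * ((B - s * A⁻¹ * t)⁻¹ * (w * x1) - B⁻¹ * (w * x1)) := by
          rw [S1r]
      _ = x1 - x2 * A⁻¹ * (y1 * x1) -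
            (x3 - x2 * A⁻¹ * t) * (B - s * A⁻¹ * t)⁻¹ * (w * x1 - s * A⁻¹ * (y1 * x1)) := by
          noncomm_ring
  · -- G2
    rw [hA3rw, hB'rw, hZ2rw]
    symm
    calc x2 * A⁻¹ - (x3 - x2 * A⁻¹ * t) * (B - s * A⁻¹ * t)⁻¹ * (s * A⁻¹)
        = x2 * A⁻¹ - x3 * ((B - s * A⁻¹ * t)⁻¹ * (s * (A⁻¹ * 1)))
            + x2 * (A⁻¹ * (t * ((B - s * A⁻¹ * t)⁻¹ * (s * (A⁻¹ * 1))))) := by noncomm_ring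
      _ = x2 * A⁻¹ - x3 * (B⁻¹ * (s * ((A - t * B⁻¹ * s)⁻¹ * 1)))
            + x2 * (A⁻¹ * (t * (B⁻¹ * (s * ((A - t * B⁻¹ * s)⁻¹ * 1))))) := by rw [← S2r]
      _ = x2 * A⁻¹ - x3 * (B⁻¹ * (s * ((A - t * B⁻¹ * s)⁻¹ * 1)))
            + x2 * ((A - t * B⁻¹ * s)⁻¹ * 1 - A⁻¹ * 1) := by rw [hKAr]
      _ = (x2 - x3 * B⁻¹ * s) * (A - t * B⁻¹ * s)⁻¹ := by noncomm_ring
  · -- G3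
    rw [hA3rw, hB'rw, hYt]
    calc x3 * B⁻¹ - (x2 - x3 * B⁻¹ * s) * (A - t * B⁻¹ * s)⁻¹ * (t * B⁻¹)
        = x3 * B⁻¹ - x2 * ((A - t * B⁻¹ * s)⁻¹ * (t * (B⁻¹ * 1)))
            + x3 * (B⁻¹ * (s * ((A - t * B⁻¹ * s)⁻¹ * (t * (B⁻¹ * 1))))) := by noncomm_ring
      _ = x3 * B⁻¹ - x2 * (A⁻¹ * (t * ((B - s * A⁻¹ * t)⁻¹ * 1)))
            + x3 * (B⁻¹ * (s * (A⁻¹ * (t * ((B - s * A⁻¹ * t)⁻¹ * 1))))) := by rw [S3r]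
      _ = x3 * B⁻¹ - x2 * (A⁻¹ * (t * ((B - s * A⁻¹ * t)⁻¹ * 1)))
            + x3 * ((B - s * A⁻¹ * t)⁻¹ * 1 - B⁻¹ * 1) := by rw [hKBr]
      _ = (x3 - x2 * A⁻¹ * t) * (B - s * A⁻¹ * t)⁻¹ := by noncomm_ring
  · -- G4
    rw [← g9, ← g7, hYW]
    noncomm_ring
  · -- G5
    rw [hA3rw, ← g9, ← g8]
  · -- G6
    rw [← g9, hY1x3B]
    noncomm_ring
end

section
/- The maps φ^{1,{2,3}}, φ^{1,2} and φ^{{1,3},2} satisfy the entwining (non-constant) Pentagon relation: for all x, y, z in D⁶ such that every element whose inverse is taken in the evaluation of either side at (x,y,z) is nonzero, φ^{1,{2,3}}₁₂ ∘ φ^{1,2}₁₃ ∘ φ^{{1,3},2}₂₃ (x,y,z) = φ^{{1,3},2}₂₃ ∘ φ^{1,{2,3}}₁₂ (x,y,z). -/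
variable {D : Type*} [DivisionRing D]

/-- The map `φ^{1,{2,3}}` on `D⁶ × D⁶`. -/
def phiI : (D × D × D × D × D × D) × (D × D × D × D × D × D) →
    (D × D × D × D × D × D) × (D × D × D × D × D × D) :=
  fun ⟨⟨a1, a2, a3, a4, a5, a6⟩, ⟨b1, b2, b3, b4, b5, b6⟩⟩ =>
    let v1 := b1 * a1; let v2 := b2 + b1 * a2; let v3 := b3 + b1 * a3
    let v4 := b4 * a1; let v5 := b5 + b4 * a2; let v6 := b6 + b4 * a3
    let u2 := (a3 * v6⁻¹ - a2 * v5⁻¹) * (v3 * v6⁻¹ - v2 * v5⁻¹)⁻¹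
    let u3 := (a2 * v2⁻¹ - a3 * v3⁻¹) * (v5 * v2⁻¹ - v6 * v3⁻¹)⁻¹
    ((a1 - u2 * v1 - u3 * v4, u2, u3, a4, a5, a6), (v1, v2, v3, v4, v5, v6))

/-- The map `φ^{1,2}` on `D⁶ × D⁶`. -/
def phiII : (D × D × D × D × D × D) × (D × D × D × D × D × D) →
    (D × D × D × D × D × D) × (D × D × D × D × D × D) :=
  fun ⟨⟨a1, a2, a3, a4, a5, a6⟩, ⟨b1, b2, b3, b4, b5, b6⟩⟩ =>
    let v1 := b1 * a1; let v2 := b2 + b1 * a2; let v3 := b3 + b1 * a3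
    ((a1 - a2 * v2⁻¹ * v1, a2 * v2⁻¹, a3 - a2 * v2⁻¹ * v3, a4, a5, a6),
     (v1, v2, v3, b4, b5, b6))

/-- The map `φ^{{1,3},2}` on `D⁶ × D⁶`. -/
def phiIII : (D × D × D × D × D × D) × (D × D × D × D × D × D) →
    (D × D × D × D × D × D) × (D × D × D × D × D × D) :=
  fun ⟨⟨a1, a2, a3, a4, a5, a6⟩, ⟨b1, b2, b3, b4, b5, b6⟩⟩ =>
    let v1 := b1 * a1 + b3 * a4; let v2 := b2 + b1 * a2 + b3 * a5
    let v3 := b1 * a3 + b3 * a6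
    ((a1 - a2 * v2⁻¹ * v1, a2 * v2⁻¹, a3 - a2 * v2⁻¹ * v3,
      a4 - a5 * v2⁻¹ * v1, a5 * v2⁻¹, a6 - a5 * v2⁻¹ * v3),
     (v1, v2, v3, b4, b5, b6))

/-- All elements inverted when evaluating `φ^{1,{2,3}}` at `(a, b)` are nonzero. -/
def regI (a b : D × D × D × D × D × D) : Prop :=
  match a, b with
  | (_, a2, a3, _, _, _), (b1, b2, b3, b4, b5, b6) =>
    let v2 := b2 + b1 * a2; let v3 := b3 + b1 * a3
    let v5 := b5 + b4 * a2; let v6 := b6 + b4 * a3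
    v2 ≠ 0 ∧ v3 ≠ 0 ∧ v5 ≠ 0 ∧ v6 ≠ 0 ∧
      v3 * v6⁻¹ - v2 * v5⁻¹ ≠ 0 ∧ v5 * v2⁻¹ - v6 * v3⁻¹ ≠ 0

/-- All elements inverted when evaluating `φ^{1,2}` at `(a, b)` are nonzero. -/
def regII (a b : D × D × D × D × D × D) : Prop :=
  b.2.1 + b.1 * a.2.1 ≠ 0

/-- All elements inverted when evaluating `φ^{{1,3},2}` at `(a, b)` are nonzero. -/
def regIII (a b : D × D × D × D × D × D) : Prop :=
  b.2.1 + b.1 * a.2.1 + b.2.2.1 * a.2.2.2.2.1 ≠ 0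


/-- cancellation: `b * t⁻¹ * (v * t⁻¹)⁻¹ = b * v⁻¹`. -/
lemma pentagon_eInv (b v t : D) (ht : t ≠ 0) :
    b * t⁻¹ * (v * t⁻¹)⁻¹ = b * v⁻¹ := by
  rw [mul_inv_rev, inv_inv, mul_assoc, ← mul_assoc t⁻¹, inv_mul_cancel₀ ht, one_mul]

lemma pentagon_core0 (a b v5 v6 c : D) (hv5 : v5 ≠ 0) (hv6 : v6 ≠ 0)
    (hW : v6 - v5 * c ≠ 0) :
    (a - b * c) * (v6 - v5 * c)⁻¹ - b * v5⁻¹ =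
      (a * v6⁻¹ - b * v5⁻¹) * (v6 * (v6 - v5 * c)⁻¹) := by
  have hc : c = v5⁻¹ * v6 - v5⁻¹ * (v6 - v5 * c) := by
    rw [mul_sub, inv_mul_cancel_left₀ hv5]; abel
  calc (a - b * c) * (v6 - v5 * c)⁻¹ - b * v5⁻¹
      = (a - b * (v5⁻¹ * v6 - v5⁻¹ * (v6 - v5 * c))) * (v6 - v5 * c)⁻¹ - b * v5⁻¹ := by
        rw [← hc]
    _ = (a - b * (v5⁻¹ * v6)) * (v6 - v5 * c)⁻¹
          + b * (v5⁻¹ * ((v6 - v5 * c) * (v6 - v5 * c)⁻¹)) - b * v5⁻¹ := by noncomm_ring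
    _ = (a - b * (v5⁻¹ * v6)) * (v6 - v5 * c)⁻¹ := by
        rw [mul_inv_cancel₀ hW, mul_one]; abel
    _ = (a * v6⁻¹ * v6 - b * (v5⁻¹ * v6)) * (v6 - v5 * c)⁻¹ := by
        conv_lhs => rw [← inv_mul_cancel_right₀ hv6 a]
    _ = (a * v6⁻¹ - b * v5⁻¹) * (v6 * (v6 - v5 * c)⁻¹) := by noncomm_ring

lemma pentagon_core (a b v5 v6 t2 t3 : D) (hv5 : v5 ≠ 0) (hv6 : v6 ≠ 0)
    (hW : v6 - v5 * t2⁻¹ * t3 ≠ 0) :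
    (a - b * t2⁻¹ * t3) * (v6 - v5 * t2⁻¹ * t3)⁻¹ - b * v5⁻¹ =
      (a * v6⁻¹ - b * v5⁻¹) * (v6 * (v6 - v5 * t2⁻¹ * t3)⁻¹) := by
  rw [mul_assoc b, mul_assoc v5] at *
  exact pentagon_core0 a b v5 v6 (t2⁻¹ * t3) hv5 hv6 hW

lemma pentagon_core2 (a b v2 v3 t2 t3 : D) (hv2 : v2 ≠ 0) (hv3 : v3 ≠ 0)
    (hW : v3 - v2 * t2⁻¹ * t3 ≠ 0) :
    b * v2⁻¹ - (a - b * t2⁻¹ * t3) * (v3 - v2 * t2⁻¹ * t3)⁻¹ =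
      (b * v2⁻¹ - a * v3⁻¹) * (v3 * (v3 - v2 * t2⁻¹ * t3)⁻¹) := by
  have h := pentagon_core a b v2 v3 t2 t3 hv2 hv3 hW
  calc b * v2⁻¹ - (a - b * t2⁻¹ * t3) * (v3 - v2 * t2⁻¹ * t3)⁻¹
      = -((a - b * t2⁻¹ * t3) * (v3 - v2 * t2⁻¹ * t3)⁻¹ - b * v2⁻¹) := by abel
    _ = -((a * v3⁻¹ - b * v2⁻¹) * (v3 * (v3 - v2 * t2⁻¹ * t3)⁻¹)) := by rw [h]
    _ = (b * v2⁻¹ - a * v3⁻¹) * (v3 * (v3 - v2 * t2⁻¹ * t3)⁻¹) := by noncomm_ring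

lemma pentagon_cancel (N Dn v6 W : D) (hv6 : v6 ≠ 0) (hW : W ≠ 0) :
    N * (v6 * W⁻¹) * (Dn * (v6 * W⁻¹))⁻¹ = N * Dn⁻¹ := by
  simp only [mul_inv_rev, inv_inv, mul_assoc, inv_mul_cancel_left₀ hW,
    mul_inv_cancel_left₀ hv6]

lemma pentagon_auxA (y1 y2 x2 s1 s2 t : D) (hs : s2 ≠ 0)
    (htd : t = s2 + s1 * x2) (ht : t ≠ 0) :
    y2 * s2⁻¹ + (y1 - y2 * s2⁻¹ * s1) * (x2 * t⁻¹) = (y2 + y1 * x2) * t⁻¹ := by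
  have h0 : s2 * t⁻¹ + s1 * (x2 * t⁻¹) = 1 := by
    rw [← mul_assoc, ← add_mul, ← htd, mul_inv_cancel₀ ht]
  have h1 : s1 * (x2 * t⁻¹) = 1 - s2 * t⁻¹ := by rw [← h0]; abel
  calc y2 * s2⁻¹ + (y1 - y2 * s2⁻¹ * s1) * (x2 * t⁻¹)
      = y2 * s2⁻¹ + y1 * (x2 * t⁻¹) - y2 * (s2⁻¹ * (s1 * (x2 * t⁻¹))) := by noncomm_ring
    _ = y2 * s2⁻¹ + y1 * (x2 * t⁻¹) - y2 * (s2⁻¹ * (1 - s2 * t⁻¹)) := by rw [h1]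
    _ = y1 * (x2 * t⁻¹) + y2 * (s2⁻¹ * (s2 * t⁻¹)) := by noncomm_ring
    _ = (y2 + y1 * x2) * t⁻¹ := by rw [inv_mul_cancel_left₀ hs]; noncomm_ring

lemma pentagon_auxB (y1 y2 y3 x2 x3 s1 s2 s3 t T : D) (hs : s2 ≠ 0)
    (htd : t = s2 + s1 * x2) (ht : t ≠ 0) (hTd : T = s3 + s1 * x3) :
    y3 - y2 * s2⁻¹ * s3 + (y1 - y2 * s2⁻¹ * s1) * (x3 - x2 * t⁻¹ * T) =
      y3 + y1 * x3 - (y2 + y1 * x2) * t⁻¹ * T := by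
  have hs3 : s3 = T - s1 * x3 := by rw [hTd]; abel
  have h0 : s2 * (t⁻¹ * T) + s1 * (x2 * (t⁻¹ * T)) = T := by
    calc s2 * (t⁻¹ * T) + s1 * (x2 * (t⁻¹ * T)) = (s2 + s1 * x2) * (t⁻¹ * T) := by
          noncomm_ring
      _ = t * (t⁻¹ * T) := by rw [← htd]
      _ = T := mul_inv_cancel_left₀ ht T
  have h0' : T - s1 * (x2 * (t⁻¹ * T)) = s2 * (t⁻¹ * T) := sub_eq_of_eq_add h0.symm
  calc y3 - y2 * s2⁻¹ * s3 + (y1 - y2 * s2⁻¹ * s1) * (x3 - x2 * t⁻¹ * T)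
      = y3 - y2 * s2⁻¹ * (T - s1 * x3) + (y1 - y2 * s2⁻¹ * s1) * (x3 - x2 * t⁻¹ * T) := by
        rw [← hs3]
    _ = y3 + y1 * x3 - y1 * (x2 * (t⁻¹ * T))
          - y2 * (s2⁻¹ * (T - s1 * (x2 * (t⁻¹ * T)))) := by noncomm_ring
    _ = y3 + y1 * x3 - y1 * (x2 * (t⁻¹ * T)) - y2 * (s2⁻¹ * (s2 * (t⁻¹ * T))) := by rw [h0']
    _ = y3 + y1 * x3 - y1 * (x2 * (t⁻¹ * T)) - y2 * (t⁻¹ * T) := by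
        rw [inv_mul_cancel_left₀ hs]
    _ = y3 + y1 * x3 - (y2 + y1 * x2) * t⁻¹ * T := by noncomm_ring

lemma pentagon_auxB1 (y1 y2 x1 x2 s1 s2 t t1 : D) (hs : s2 ≠ 0)
    (htd : t = s2 + s1 * x2) (ht : t ≠ 0) (ht1 : t1 = s1 * x1) :
    (y1 - y2 * s2⁻¹ * s1) * (x1 - x2 * t⁻¹ * t1) =
      y1 * x1 - (y2 + y1 * x2) * t⁻¹ * t1 := by
  subst ht1
  have h0 : s2 * (t⁻¹ * (s1 * x1)) + s1 * (x2 * (t⁻¹ * (s1 * x1))) = s1 * x1 := by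
    calc s2 * (t⁻¹ * (s1 * x1)) + s1 * (x2 * (t⁻¹ * (s1 * x1)))
        = (s2 + s1 * x2) * (t⁻¹ * (s1 * x1)) := by noncomm_ring
      _ = t * (t⁻¹ * (s1 * x1)) := by rw [← htd]
      _ = s1 * x1 := mul_inv_cancel_left₀ ht _
  have h1 : s1 * x1 - s1 * (x2 * (t⁻¹ * (s1 * x1))) = s2 * (t⁻¹ * (s1 * x1)) :=
    sub_eq_of_eq_add h0.symm
  calc (y1 - y2 * s2⁻¹ * s1) * (x1 - x2 * t⁻¹ * (s1 * x1))
      = y1 * x1 - y1 * (x2 * (t⁻¹ * (s1 * x1)))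
          - y2 * (s2⁻¹ * (s1 * x1 - s1 * (x2 * (t⁻¹ * (s1 * x1))))) := by noncomm_ring
    _ = y1 * x1 - y1 * (x2 * (t⁻¹ * (s1 * x1)))
          - y2 * (s2⁻¹ * (s2 * (t⁻¹ * (s1 * x1)))) := by rw [h1]
    _ = y1 * x1 - y1 * (x2 * (t⁻¹ * (s1 * x1))) - y2 * (t⁻¹ * (s1 * x1)) := by
        rw [inv_mul_cancel_left₀ hs]
    _ = y1 * x1 - (y2 + y1 * x2) * t⁻¹ * (s1 * x1) := by noncomm_ring

lemma pentagon_auxU2 (x2 x3 v2 v3 v5 v6 t2 t3 : D) (hv5 : v5 ≠ 0) (hv6 : v6 ≠ 0)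
    (ht2 : t2 ≠ 0) (hV6 : v6 - v5 * t2⁻¹ * t3 ≠ 0) :
    ((x3 - x2 * t2⁻¹ * t3) * (v6 - v5 * t2⁻¹ * t3)⁻¹ - x2 * t2⁻¹ * (v5 * t2⁻¹)⁻¹) *
        ((v3 - v2 * t2⁻¹ * t3) * (v6 - v5 * t2⁻¹ * t3)⁻¹ - v2 * t2⁻¹ * (v5 * t2⁻¹)⁻¹)⁻¹ =
      (x3 * v6⁻¹ - x2 * v5⁻¹) * (v3 * v6⁻¹ - v2 * v5⁻¹)⁻¹ := by
  rw [pentagon_eInv x2 v5 t2 ht2, pentagon_eInv v2 v5 t2 ht2,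
    pentagon_core x3 x2 v5 v6 t2 t3 hv5 hv6 hV6,
    pentagon_core v3 v2 v5 v6 t2 t3 hv5 hv6 hV6,
    pentagon_cancel _ _ _ _ hv6 hV6]

lemma pentagon_auxU3 (x2 x3 v2 v3 v5 v6 t2 t3 : D) (hv2 : v2 ≠ 0) (hv3 : v3 ≠ 0)
    (ht2 : t2 ≠ 0) (hV3 : v3 - v2 * t2⁻¹ * t3 ≠ 0) :
    (x2 * t2⁻¹ * (v2 * t2⁻¹)⁻¹ - (x3 - x2 * t2⁻¹ * t3) * (v3 - v2 * t2⁻¹ * t3)⁻¹) *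
        (v5 * t2⁻¹ * (v2 * t2⁻¹)⁻¹ - (v6 - v5 * t2⁻¹ * t3) * (v3 - v2 * t2⁻¹ * t3)⁻¹)⁻¹ =
      (x2 * v2⁻¹ - x3 * v3⁻¹) * (v5 * v2⁻¹ - v6 * v3⁻¹)⁻¹ := by
  rw [pentagon_eInv x2 v2 t2 ht2, pentagon_eInv v5 v2 t2 ht2,
    pentagon_core2 x3 x2 v2 v3 t2 t3 hv2 hv3 hV3,
    pentagon_core2 v6 v5 v2 v3 t2 t3 hv2 hv3 hV3,
    pentagon_cancel _ _ _ _ hv3 hV3]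

lemma pentagon_auxX2 (x2 x3 v2 v3 v5 v6 : D) (hv2 : v2 ≠ 0) (hv3 : v3 ≠ 0)
    (hv5 : v5 ≠ 0) (hv6 : v6 ≠ 0) (hP : v3 * v6⁻¹ - v2 * v5⁻¹ ≠ 0) :
    (x3 * v6⁻¹ - x2 * v5⁻¹) * (v3 * v6⁻¹ - v2 * v5⁻¹)⁻¹ * v2 +
      (x2 * v2⁻¹ - x3 * v3⁻¹) * (v5 * v2⁻¹ - v6 * v3⁻¹)⁻¹ * v5 = x2 := by
  set R := v2⁻¹ * v3 * v6⁻¹ - v5⁻¹ with hRdef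
  have hR : R = v2⁻¹ * (v3 * v6⁻¹ - v2 * v5⁻¹) := by
    rw [hRdef, mul_sub, inv_mul_cancel_left₀ hv2, ← mul_assoc]
  have hRne : R ≠ 0 := by
    rw [hR]; exact mul_ne_zero (inv_ne_zero hv2) hP
  have h1 : (v3 * v6⁻¹ - v2 * v5⁻¹)⁻¹ * v2 = R⁻¹ := by
    rw [hR, mul_inv_rev, inv_inv]
  have h2 : v5 * v2⁻¹ - v6 * v3⁻¹ = v5 * (R * (v6 * v3⁻¹)) := by
    have e : R * (v6 * v3⁻¹) = v2⁻¹ - v5⁻¹ * (v6 * v3⁻¹) := by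
      rw [hRdef, sub_mul, mul_assoc (v2⁻¹ * v3), inv_mul_cancel_left₀ hv6,
        mul_assoc v2⁻¹, mul_inv_cancel₀ hv3, mul_one]
    rw [e, mul_sub, mul_inv_cancel_left₀ hv5]
  have h3 : (v5 * v2⁻¹ - v6 * v3⁻¹)⁻¹ * v5 = v3 * v6⁻¹ * R⁻¹ := by
    rw [h2, mul_inv_rev, mul_inv_rev, mul_inv_rev, inv_inv]
    rw [mul_assoc _ v5⁻¹ v5, inv_mul_cancel₀ hv5, mul_one]
  have h4 : x3 * v6⁻¹ - x2 * v5⁻¹ + (x2 * v2⁻¹ - x3 * v3⁻¹) * (v3 * v6⁻¹) = x2 * R := by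
    rw [sub_mul, mul_assoc x3, inv_mul_cancel_left₀ hv3, hRdef]
    noncomm_ring
  calc (x3 * v6⁻¹ - x2 * v5⁻¹) * (v3 * v6⁻¹ - v2 * v5⁻¹)⁻¹ * v2 +
        (x2 * v2⁻¹ - x3 * v3⁻¹) * (v5 * v2⁻¹ - v6 * v3⁻¹)⁻¹ * v5
      = (x3 * v6⁻¹ - x2 * v5⁻¹) * ((v3 * v6⁻¹ - v2 * v5⁻¹)⁻¹ * v2) +
        (x2 * v2⁻¹ - x3 * v3⁻¹) * ((v5 * v2⁻¹ - v6 * v3⁻¹)⁻¹ * v5) := by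
        rw [mul_assoc, mul_assoc]
    _ = (x3 * v6⁻¹ - x2 * v5⁻¹) * R⁻¹ + (x2 * v2⁻¹ - x3 * v3⁻¹) * (v3 * v6⁻¹ * R⁻¹) := by
        rw [h1, h3]
    _ = (x3 * v6⁻¹ - x2 * v5⁻¹ + (x2 * v2⁻¹ - x3 * v3⁻¹) * (v3 * v6⁻¹)) * R⁻¹ := by
        noncomm_ring
    _ = x2 * R * R⁻¹ := by rw [h4]
    _ = x2 := mul_inv_cancel_right₀ hRne x2

lemma pentagon_auxU1 (x1 x2 u2 u3 v1 v2 v4 v5 t1 t2 : D)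
    (h : u2 * v2 + u3 * v5 = x2) :
    x1 - x2 * t2⁻¹ * t1 - u2 * (v1 - v2 * t2⁻¹ * t1) - u3 * (v4 - v5 * t2⁻¹ * t1) =
      x1 - u2 * v1 - u3 * v4 := by
  rw [← h]; noncomm_ring

/-- The maps `φ^{1,{2,3}}`, `φ^{1,2}` and `φ^{{1,3},2}` satisfy the entwining
(non-constant) Pentagon relation, wherever all the inverses taken on either side are
inverses of nonzero elements. -/
theorem entwining_pentagon_phi (x y z : D × D × D × D × D × D)
    (hL1 : regIII y z)
    (hL2 : regII (map23 phiIII (x, y, z)).1 (map23 phiIII (x, y, z)).2.2)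
    (hL3 : regI (map13 phiII (map23 phiIII (x, y, z))).1
             (map13 phiII (map23 phiIII (x, y, z))).2.1)
    (hR1 : regI x y)
    (hR2 : regIII (map12 phiI (x, y, z)).2.1 (map12 phiI (x, y, z)).2.2) :
    map12 phiI (map13 phiII (map23 phiIII (x, y, z))) =
      map23 phiIII (map12 phiI (x, y, z)) := by
  obtain ⟨x1,x2,x3,x4,x5,x6⟩ := x
  obtain ⟨y1,y2,y3,y4,y5,y6⟩ := y
  obtain ⟨z1,z2,z3,z4,z5,z6⟩ := z
  simp only [map12, map13, map23, phiI, phiII, phiIII, regI, regII, regIII] at *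
  clear hR2
  set s1 := z1 * y1 + z3 * y4 with hs1d
  set s2 := z2 + z1 * y2 + z3 * y5 with hs2d
  set s3 := z1 * y3 + z3 * y6 with hs3d
  set v1 := y1 * x1 with hv1d
  set v2 := y2 + y1 * x2 with hv2d
  set v3 := y3 + y1 * x3 with hv3d
  set v4 := y4 * x1 with hv4d
  set v5 := y5 + y4 * x2 with hv5d
  set v6 := y6 + y4 * x3 with hv6d
  set t1 := s1 * x1 with ht1d
  set t2 := s2 + s1 * x2 with ht2d
  set t3 := s3 + s1 * x3 with ht3d
  obtain ⟨hv2, hv3, hv5, hv6, hP, hQ⟩ := hR1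
  obtain ⟨hV2ne, hV3ne, hV5ne, hV6ne, hPne, hQne⟩ := hL3
  have hw1 : z1 * v1 + z3 * v4 = t1 := by
    rw [hv1d, hv4d, ht1d, hs1d]; noncomm_ring
  have hw2 : z2 + z1 * v2 + z3 * v5 = t2 := by
    rw [hv2d, hv5d, ht2d, hs2d, hs1d]; noncomm_ring
  have hw3 : z1 * v3 + z3 * v6 = t3 := by
    rw [hv3d, hv6d, ht3d, hs3d, hs1d]; noncomm_ring
  rw [hw1, hw2, hw3]
  have hV1 : (y1 - y2 * s2⁻¹ * s1) * (x1 - x2 * t2⁻¹ * t1) = v1 - v2 * t2⁻¹ * t1 := by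
    rw [hv1d, hv2d]; exact pentagon_auxB1 y1 y2 x1 x2 s1 s2 t2 t1 hL1 ht2d hL2 ht1d
  have hV4 : (y4 - y5 * s2⁻¹ * s1) * (x1 - x2 * t2⁻¹ * t1) = v4 - v5 * t2⁻¹ * t1 := by
    rw [hv4d, hv5d]; exact pentagon_auxB1 y4 y5 x1 x2 s1 s2 t2 t1 hL1 ht2d hL2 ht1d
  have hV2 : y2 * s2⁻¹ + (y1 - y2 * s2⁻¹ * s1) * (x2 * t2⁻¹) = v2 * t2⁻¹ := by
    rw [hv2d]; exact pentagon_auxA y1 y2 x2 s1 s2 t2 hL1 ht2d hL2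
  have hV5 : y5 * s2⁻¹ + (y4 - y5 * s2⁻¹ * s1) * (x2 * t2⁻¹) = v5 * t2⁻¹ := by
    rw [hv5d]; exact pentagon_auxA y4 y5 x2 s1 s2 t2 hL1 ht2d hL2
  have hV3 : y3 - y2 * s2⁻¹ * s3 + (y1 - y2 * s2⁻¹ * s1) * (x3 - x2 * t2⁻¹ * t3)
      = v3 - v2 * t2⁻¹ * t3 := by
    rw [hv3d, hv2d]; exact pentagon_auxB y1 y2 y3 x2 x3 s1 s2 s3 t2 t3 hL1 ht2d hL2 ht3d
  have hV6 : y6 - y5 * s2⁻¹ * s3 + (y4 - y5 * s2⁻¹ * s1) * (x3 - x2 * t2⁻¹ * t3)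
      = v6 - v5 * t2⁻¹ * t3 := by
    rw [hv6d, hv5d]; exact pentagon_auxB y4 y5 y6 x2 x3 s1 s2 s3 t2 t3 hL1 ht2d hL2 ht3d
  rw [hV3] at hV3ne
  rw [hV6] at hV6ne
  rw [hV1, hV2, hV3, hV4, hV5, hV6]
  rw [pentagon_auxU2 x2 x3 v2 v3 v5 v6 t2 t3 hv5 hv6 hL2 hV6ne,
    pentagon_auxU3 x2 x3 v2 v3 v5 v6 t2 t3 hv2 hv3 hL2 hV3ne,
    pentagon_auxU1 x1 x2 _ _ v1 v2 v4 v5 t1 t2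
      (pentagon_auxX2 x2 x3 v2 v3 v5 v6 hv2 hv3 hv5 hv6 hP)]
end
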